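/- Let R be an integral domain, M a torsion-free R-module, and suppose M is the union of a countable ascending chain 0 = M_0 ≤ M_1 ≤ … of pure projective submodules. Then there exists an ascending chain 0 = F_0 ≤ F_1 ≤ … of free R-modules such that each F_n is pure in F_{n+1}, each F_n contains M_n as a direct summand with complement K_n (and the K_n form an ascending chain), and M is a direct summand of F = ⋃_{n<ω} F_n. -/

import Mathlib

open DirectSum Cardinal

universe u v w

variable (R : Type u) [CommRing R] [IsDomain R]

/-- A submodule `N` of `M` is *pure* if every finite system of `R`-linear equations with
constants in `N` that is solvable in `M` is solvable in `N`. -/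
def IsPureSub {M : Type v} [AddCommGroup M] [Module R M] (N : Submodule R M) : Prop :=
  ∀ (n m : ℕ) (r : Fin n → Fin m → R) (a : Fin n → M),
    (∀ i, a i ∈ N) →
    (∃ x : Fin m → M, ∀ i, ∑ j, r i j • x j = a i) →
    (∃ y : Fin m → M, (∀ j, y j ∈ N) ∧ ∀ i, ∑ j, r i j • y j = a i)

/-- A submodule `A ≤ B` is *balanced* if `B/A` is torsion-free and every rank-1
torsion-free module has the projective property w.r.t. `0 → A → B → B/A → 0`. -/
def IsBalanced {B : Type v} [AddCommGroup B] [Module R B] (A : Submodule R B) : Prop :=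
  NoZeroSMulDivisors R (B ⧸ A) ∧
  ∀ (J : Type w) [AddCommGroup J] [Module R J], NoZeroSMulDivisors R J →
    Module.rank R J = 1 →
    ∀ φ : J →ₗ[R] B ⧸ A, ∃ ψ : J →ₗ[R] B, A.mkQ ∘ₗ ψ = φ

/-- `M` is isomorphic to a direct sum of ideals of `R`. -/
def IsDirectSumOfIdeals (M : Type v) [AddCommGroup M] [Module R M] : Prop :=
  ∃ (ι : Type w) (I : ι → Ideal R), Nonempty (M ≃ₗ[R] ⨁ i, ↥(I i))

/-- `R` is an h-local domain. -/
def IsHLocal : Prop :=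
  (∀ P : Ideal R, P.IsPrime → P ≠ ⊥ → ∃! m : Ideal R, m.IsMaximal ∧ P ≤ m) ∧
  (∀ r : R, r ≠ 0 → {m : Ideal R | m.IsMaximal ∧ r ∈ m}.Finite)

/-- `R` is a Prüfer domain: finitely generated ideals are projective. -/
def IsPruefer : Prop := ∀ I : Ideal R, I.FG → Module.Projective R ↥I

/-- A `G(ℵ₀)`-family of submodules of `M`. -/
def IsGAleph0Family {M : Type v} [AddCommGroup M] [Module R M]
    (𝓑 : Set (Submodule R M)) : Prop :=
  ⊥ ∈ 𝓑 ∧ ⊤ ∈ 𝓑 ∧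
  (∀ c ⊆ 𝓑, c.Nonempty → IsChain (· ≤ ·) c → sSup c ∈ 𝓑) ∧
  (∀ A₀ ∈ 𝓑, ∀ H : Set M, H.Countable →
    ∃ A ∈ 𝓑, A₀ ≤ A ∧ H ⊆ (A : Set M) ∧
      ∃ S : Set M, S.Countable ∧ S ⊆ (A : Set M) ∧ A ≤ A₀ ⊔ Submodule.span R S)

/-- For submodules `A ≤ B` of `F`: `A` is pure in `B` (finite systems with constants in
`A` solvable in `B` are solvable in `A`). -/
def IsPurePair {F : Type v} [AddCommGroup F] [Module R F] (A B : Submodule R F) : Prop :=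
  ∀ (n m : ℕ) (r : Fin n → Fin m → R) (a : Fin n → F),
    (∀ i, a i ∈ A) →
    (∃ x : Fin m → F, (∀ j, x j ∈ B) ∧ ∀ i, ∑ j, r i j • x j = a i) →
    (∃ y : Fin m → F, (∀ j, y j ∈ A) ∧ ∀ i, ∑ j, r i j • y j = a i)

/-- if a torsion-free `M` is the union of a countable ascending chain of
pure projective submodules `M_n`, then there is an ascending chain of free modules
`F_n`, each pure in the next, with `M_n` a direct summand of `F_n` with complement
`K_n` (the `K_n` ascending), and `M` a direct summand of `F = ⋃ F_n`. -/
theorem stmt15_aux {R : Type u} [CommRing R] [IsDomain R]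
    {M : Type v} [AddCommGroup M] [Module R M] [NoZeroSMulDivisors R M]
    (Mn : ℕ → Submodule R M) (hmono : Monotone Mn)
    (hunion : ⨆ n, Mn n = ⊤)
    (hpure : ∀ n, IsPureSub R (Mn n))
    (A : ℕ → Type v) [∀ n, AddCommGroup (A n)] [∀ n, Module R (A n)]
    [∀ n, Module.Free R (A n)]
    (π : ∀ n, A n →ₗ[R] ↥(Mn n)) (s : ∀ n, ↥(Mn n) →ₗ[R] A n)
    (hs : ∀ n x, π n (s n x) = x) :
    ∃ (F : ModuleCat.{v} R) (ι : M →ₗ[R] F), Function.Injective ι ∧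
      ∃ Fn Kn : ℕ → Submodule R F,
        Monotone Fn ∧ Monotone Kn ∧
        (∀ n, Module.Free R ↥(Fn n)) ∧
        (∀ n, IsPurePair R (Fn n) (Fn (n + 1))) ∧
        (∀ n, Submodule.map ι (Mn n) ⊔ Kn n = Fn n ∧
              Submodule.map ι (Mn n) ⊓ Kn n = ⊥) ∧
        (⨆ n, Fn n = ⊤) ∧
        ∃ C : Submodule R F, IsCompl (LinearMap.range ι) C := by
  classical
  let C := ⨁ n, A n
  let L : ∀ k, A k →ₗ[R] C := fun k => DirectSum.lof R ℕ A k
  let g : ℕ → ∀ k, A k →ₗ[R] A k := fun n k =>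
    if k < n then LinearMap.id else if k = n then LinearMap.id - (s k) ∘ₗ (π k) else 0
  let q : ℕ → C →ₗ[R] C := fun n => DirectSum.toModule R ℕ C fun k => L k ∘ₗ g n k
  let K' : ℕ → Submodule R C := fun n =>
    (⨆ k : Fin n, LinearMap.range (L k.1)) ⊔ Submodule.map (L n) (LinearMap.ker (π n))
  have hqof : ∀ n k x, q n (L k x) = L k (g n k x) := fun n k x =>
    DirectSum.toModule_lof R k x
  have hrange_le : ∀ n k, k < n → LinearMap.range (L k) ≤ K' n := fun n k hk =>
    le_sup_of_le_left (le_iSup (fun k : Fin n => LinearMap.range (L k.1)) ⟨k, hk⟩)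
  have hker_le : ∀ n, Submodule.map (L n) (LinearMap.ker (π n)) ≤ K' n := fun n => le_sup_right
  have hq_mem : ∀ n c, q n c ∈ K' n := by
    intro n c
    induction c using DirectSum.induction_on with
    | zero => simpa using (K' n).zero_mem
    | of k x =>
      rw [← DirectSum.lof_eq_of R, hqof]
      by_cases hk : k < n
      · exact hrange_le n k hk ⟨g n k x, rfl⟩
      · by_cases hk' : k = n
        · subst hk'
          refine hker_le k ⟨g k k x, ?_, rfl⟩
          simp [g, hk, LinearMap.mem_ker, map_sub, hs]
        · have hz : g n k x = 0 := by simp [g, hk, hk']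
          rw [hz, map_zero]; exact (K' n).zero_mem
    | add x y hx hy => rw [map_add]; exact (K' n).add_mem hx hy
  have hq_fix : ∀ n c, c ∈ K' n → q n c = c := by
    intro n
    have : K' n ≤ LinearMap.eqLocus (q n) LinearMap.id := by
      refine sup_le (iSup_le ?_) ?_
      · rintro ⟨k, hk⟩ x hx
        obtain ⟨v, rfl⟩ := hx
        show q n (L k v) = L k v
        rw [hqof]
        congr 1
        simp [g, hk]
      · rintro x ⟨v, hv, rfl⟩
        show q n (L n v) = L n v
        rw [hqof]
        congr 1
        simp [g, LinearMap.mem_ker.mp hv]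
    exact fun c hc => this hc
  have hK'mono : Monotone K' := by
    apply monotone_nat_of_le_succ
    intro n
    refine sup_le (iSup_le ?_) ?_
    · rintro ⟨k, hk⟩
      exact hrange_le (n + 1) k (hk.trans (Nat.lt_succ_self n))
    · exact LinearMap.map_le_range.trans (hrange_le (n + 1) n (Nat.lt_succ_self n))
  have hK'top : ⨆ n, K' n = ⊤ := by
    rw [eq_top_iff]
    refine fun c _ => ?_
    clear * - hrange_le
    induction c using DirectSum.induction_on with
    | zero => exact zero_mem _
    | of k x =>
      exact Submodule.mem_iSup_of_mem (k + 1)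
        (hrange_le (k + 1) k (Nat.lt_succ_self k) ⟨x, by rw [DirectSum.lof_eq_of]⟩)
    | add x y hx hy => exact add_mem hx hy
  let ι : M →ₗ[R] M × C := LinearMap.inl R M C
  let κ : C →ₗ[R] M × C := LinearMap.inr R M C
  let Fn : ℕ → Submodule R (M × C) := fun n =>
    Submodule.map ι (Mn n) ⊔ Submodule.map κ (K' n)
  have mem_Fn : ∀ n (u : M × C), u ∈ Fn n ↔ u.1 ∈ Mn n ∧ u.2 ∈ K' n := by
    intro n u
    constructor
    · intro hu
      have hle : Fn n ≤ Submodule.comap (LinearMap.fst R M C) (Mn n) ⊓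
          Submodule.comap (LinearMap.snd R M C) (K' n) := by
        refine sup_le ?_ ?_
        · rintro _ ⟨m, hm, rfl⟩
          exact ⟨by simpa [ι] using hm, by simp [ι]⟩
        · rintro _ ⟨c, hc, rfl⟩
          exact ⟨by simp [κ], by simpa [κ] using hc⟩
      exact hle hu
    · rintro ⟨h1, h2⟩
      have hu : u = ι u.1 + κ u.2 := by ext <;> simp [ι, κ]
      rw [hu]
      exact add_mem (Submodule.mem_sup_left ⟨u.1, h1, rfl⟩)
        (Submodule.mem_sup_right ⟨u.2, h2, rfl⟩)
  have hFree : ∀ n, Module.Free R ↥(Fn n) := by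
    intro n
    let G := A n × (∀ k : Fin n, A k.1)
    let T : (∀ k : Fin n, A k.1) →ₗ[R] C :=
      LinearMap.lsum R (fun k : Fin n => A k.1) R (fun k => L k.1)
    let Φ : G →ₗ[R] M × C :=
      ((Mn n).subtype ∘ₗ π n ∘ₗ LinearMap.fst R _ _).prod
        ((L n ∘ₗ (LinearMap.id - (s n) ∘ₗ (π n))) ∘ₗ LinearMap.fst R _ _ +
          T ∘ₗ LinearMap.snd R _ _)
    have hΦ : ∀ (a : A n) (f : ∀ k : Fin n, A k.1),
        Φ (a, f) = ((π n a : M), L n (a - s n (π n a)) + ∑ k, L k.1 (f k)) := by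
      intro a f
      simp only [Φ, T, LinearMap.prod_apply, Function.prod, LinearMap.add_apply,
        LinearMap.coe_comp, Function.comp_apply, LinearMap.sub_apply, LinearMap.id_apply,
        map_sub, LinearMap.lsum_apply, LinearMap.sum_apply, LinearMap.proj_apply, Prod.mk.injEq]
      exact ⟨rfl, rfl⟩
    have hinj : Function.Injective Φ := by
      rw [← LinearMap.ker_eq_bot, eq_bot_iff]
      rintro ⟨a, f⟩ hmem
      rw [LinearMap.mem_ker, hΦ, Prod.mk_eq_zero] at hmem
      obtain ⟨h1, h2⟩ := hmem
      have hπa : π n a = 0 := by exact_mod_cast h1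
      rw [hπa, map_zero, sub_zero] at h2
      have ha : a = 0 := by
        have := congrArg (DirectSum.component R ℕ A n) h2
        rw [map_add, map_zero, map_sum] at this
        rw [DirectSum.component.lof_self] at this
        have hz : ∀ k : Fin n, DirectSum.component R ℕ A n (L k.1 (f k)) = 0 := by
          intro k
          rw [DirectSum.component.of, dif_neg (Nat.ne_of_lt k.2)]
        rw [Finset.sum_congr rfl (fun k _ => hz k), Finset.sum_const_zero, add_zero] at this
        exact this
      have hf : f = 0 := by
        funext k
        have := congrArg (DirectSum.component R ℕ A k.1) h2
        rw [map_add, map_zero, map_sum] at this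
        rw [DirectSum.component.of, dif_neg (Nat.ne_of_gt k.2)] at this
        have hz : ∀ j : Fin n, j ≠ k → DirectSum.component R ℕ A k.1 (L j.1 (f j)) = 0 := by
          intro j hj
          rw [DirectSum.component.of,
            dif_neg (fun h => hj (Fin.ext h))]
        rw [Finset.sum_eq_single k (fun j _ hj => hz j hj) (by simp),
          DirectSum.component.lof_self, zero_add] at this
        exact this
      rw [Submodule.mem_bot, Prod.mk_eq_zero]
      exact ⟨ha, hf⟩
    have hrange : LinearMap.range Φ = Fn n := by
      apply le_antisymm
      · rintro _ ⟨⟨a, f⟩, rfl⟩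
        rw [mem_Fn, hΦ]
        constructor
        · exact (π n a).2
        · refine add_mem (hker_le n ⟨a - s n (π n a), ?_, rfl⟩)
            (sum_mem fun k _ => hrange_le n k.1 k.2 ⟨f k, rfl⟩)
          simp [LinearMap.mem_ker, map_sub, hs]
      · refine sup_le ?_ ?_
        · rintro _ ⟨m, hm, rfl⟩
          refine ⟨(s n ⟨m, hm⟩, 0), ?_⟩
          rw [hΦ, hs]
          ext
          · rfl
          · simp [ι]
        · rw [Submodule.map_le_iff_le_comap]
          refine sup_le (iSup_le ?_) ?_
          · rintro k _ ⟨x, rfl⟩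
            refine ⟨(0, Pi.single k x), ?_⟩
            rw [hΦ]
            ext
            · simp [κ]
            · simp only [map_zero, sub_zero, zero_add]
              rw [Finset.sum_eq_single k (fun j _ hj => by
                  rw [Pi.single_eq_of_ne hj, map_zero]) (by simp)]
              simp [κ]
          · rintro _ ⟨x, hx, rfl⟩
            refine ⟨(x, 0), ?_⟩
            rw [hΦ, LinearMap.mem_ker.mp hx]
            ext
            · simp [κ]
            · simp [κ]
    exact Module.Free.of_equiv
      ((LinearEquiv.ofInjective Φ hinj).trans (LinearEquiv.ofEq _ _ hrange))
  have hpp : ∀ n, IsPurePair R (Fn n) (Fn (n + 1)) := by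
    intro n p m' r a ha hx
    obtain ⟨x, -, hxe⟩ := hx
    have h1 : ∀ i, (a i).1 ∈ Mn n := fun i => ((mem_Fn n (a i)).1 (ha i)).1
    have h2 : ∀ i, (a i).2 ∈ K' n := fun i => ((mem_Fn n (a i)).1 (ha i)).2
    obtain ⟨y', hy'm, hy'e⟩ := hpure n p m' r (fun i => (a i).1) h1
      ⟨fun j => (x j).1, fun i => by
        have h := congrArg (LinearMap.fst R M C) (hxe i)
        simpa only [map_sum, map_smul, LinearMap.fst_apply] using h⟩
    refine ⟨fun j => (y' j, q n ((x j).2)),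
      fun j => (mem_Fn n _).2 ⟨hy'm j, hq_mem n _⟩, fun i => ?_⟩
    have hsnd : ∑ j, r i j • q n ((x j).2) = (a i).2 := by
      have h := congrArg (LinearMap.snd R M C) (hxe i)
      simp only [map_sum, map_smul, LinearMap.snd_apply] at h
      calc ∑ j, r i j • q n ((x j).2) = q n (∑ j, r i j • (x j).2) := by
            rw [map_sum]
            exact Finset.sum_congr rfl fun j _ => (map_smul (q n) _ _).symm
        _ = q n ((a i).2) := by rw [h]
        _ = (a i).2 := hq_fix n _ (h2 i)
    have hfst : ∑ j, r i j • y' j = (a i).1 := hy'e i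
    have hprod : (∑ j, r i j • ((y' j, q n ((x j).2)) : M × C)) =
        (∑ j, r i j • y' j, ∑ j, r i j • q n ((x j).2)) := by
      rw [Prod.ext_iff]
      constructor
      · rw [← LinearMap.fst_apply (R := R), map_sum]
        exact Finset.sum_congr rfl fun j _ => by simp
      · rw [← LinearMap.snd_apply (R := R), map_sum]
        exact Finset.sum_congr rfl fun j _ => by simp
    rw [hprod, hfst, hsnd]
  refine ⟨ModuleCat.of R (M × C), ι, LinearMap.inl_injective, Fn,
    fun n => Submodule.map κ (K' n),
    fun a b h => sup_le_sup (Submodule.map_mono (hmono h)) (Submodule.map_mono (hK'mono h)),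
    fun a b h => Submodule.map_mono (hK'mono h), hFree, hpp, fun n => ⟨rfl, ?_⟩, ?_, ?_⟩
  · rw [eq_bot_iff]
    rintro u ⟨hu1, hu2⟩
    obtain ⟨m, hm, hum⟩ := hu1
    obtain ⟨c, hc, huc⟩ := hu2
    have h1 : u.1 = 0 := by rw [← huc]; rfl
    have h2 : u.2 = 0 := by rw [← hum]; rfl
    rw [Submodule.mem_bot, Prod.ext_iff]
    exact ⟨h1, h2⟩
  · rw [eq_top_iff, ← LinearMap.sup_range_inl_inr (R := R) (M := M) (M₂ := C)]
    refine sup_le ?_ ?_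
    · have hr : LinearMap.range (LinearMap.inl R M C) = ⨆ n, Submodule.map ι (Mn n) := by
        rw [← Submodule.map_iSup, hunion, Submodule.map_top]
      rw [hr]
      exact iSup_mono fun n => le_sup_left
    · have hr : LinearMap.range (LinearMap.inr R M C) = ⨆ n, Submodule.map κ (K' n) := by
        rw [← Submodule.map_iSup, hK'top, Submodule.map_top]
      rw [hr]
      exact iSup_mono fun n => le_sup_right
  · exact ⟨LinearMap.range κ, LinearMap.isCompl_range_inl_inr⟩

theorem stmt15 {M : Type v} [AddCommGroup M] [Module R M] [NoZeroSMulDivisors R M]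
    (Mn : ℕ → Submodule R M) (hmono : Monotone Mn)
    (h0 : Mn 0 = ⊥) (hunion : ⨆ n, Mn n = ⊤)
    (hproj : ∀ n, Module.Projective R ↥(Mn n))
    (hpure : ∀ n, IsPureSub R (Mn n)) :
    ∃ (F : ModuleCat.{v} R) (ι : M →ₗ[R] F), Function.Injective ι ∧
      ∃ Fn Kn : ℕ → Submodule R F,
        Monotone Fn ∧ Monotone Kn ∧
        (∀ n, Module.Free R ↥(Fn n)) ∧
        (∀ n, IsPurePair R (Fn n) (Fn (n + 1))) ∧
        (∀ n, Submodule.map ι (Mn n) ⊔ Kn n = Fn n ∧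
              Submodule.map ι (Mn n) ⊓ Kn n = ⊥) ∧
        (⨆ n, Fn n = ⊤) ∧
        ∃ C : Submodule R F, IsCompl (LinearMap.range ι) C := by
  rcases subsingleton_or_nontrivial M with hM | hM
  · haveI hsM : Subsingleton ↑(ModuleCat.of R M) := hM
    haveI : Subsingleton (Submodule R ↑(ModuleCat.of R M)) := by
      constructor
      intro p q
      ext x
      simp [Subsingleton.elim x (0 : M)]
    refine ⟨ModuleCat.of R M, LinearMap.id, fun a b _ => Subsingleton.elim a b,
      fun _ => ⊤, fun _ => ⊥, monotone_const, monotone_const,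
      fun n => ?_, fun n => ?_, fun n => ⟨Subsingleton.elim _ _, Subsingleton.elim _ _⟩,
      Subsingleton.elim _ _, ⟨⊥, ?_⟩⟩
    · exact Module.Free.of_subsingleton R _
    · rintro p m' r a ha ⟨x, -, hxe⟩
      exact ⟨x, fun j => trivial, hxe⟩
    · rw [LinearMap.range_id]
      exact isCompl_top_bot
  · obtain ⟨m0, hm0⟩ := exists_ne (0 : M)
    haveI : Small.{v} R := small_of_injective (f := fun r : R => r • m0) (by
      intro r r' h
      have h' : r • m0 = r' • m0 := h
      have hz : (r - r') • m0 = 0 := by rw [sub_smul, h', sub_self]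
      rcases smul_eq_zero.mp hz with h' | h'
      · exact sub_eq_zero.mp h'
      · exact absurd h' hm0)
    haveI : ∀ n, Small.{v} (↥(Mn n) →₀ R) := fun n =>
      small_of_injective (DFunLike.coe_injective)
    haveI : ∀ n, Module.Free R (Shrink.{v} (↥(Mn n) →₀ R)) := fun n =>
      Module.Free.of_equiv (Shrink.linearEquiv R (↥(Mn n) →₀ R)).symm
    choose s₀ hs₀ using fun n => Module.projective_def.mp (hproj n)
    exact stmt15_aux Mn hmono hunion hpure (fun n => Shrink.{v} (↥(Mn n) →₀ R))
      (fun n => (Finsupp.linearCombination R id) ∘ₗ (Shrink.linearEquiv R (↥(Mn n) →₀ R)).toLinearMap)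
      (fun n => (Shrink.linearEquiv R (↥(Mn n) →₀ R)).symm.toLinearMap ∘ₗ s₀ n)
      (fun n x => by
        simp only [LinearMap.coe_comp, Function.comp_apply, LinearEquiv.coe_coe,
          LinearEquiv.apply_symm_apply]
        exact hs₀ n x)
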